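/- Let A < B, let p₁ ≥ 1, let Ψ₀ ≡ 1, and let Ψ₁,…,Ψ_{k−1} : [A,B] → ℝ and C₂₂ : [A,B] → ℝ^{p₁×p₁} (symmetric-matrix valued) be continuous. Suppose that {Ψ₀,…,Ψ_{k−1}} is a Chebyshev system on [A,B] and that for every nonzero vector Q ∈ ℝ^{p₁} the family {Ψ₀,…,Ψ_{k−1}, x ↦ QᵀC₂₂(x)Q} is a Chebyshev system on [A,B]. Then for any finitely supported probability measure ξ on [A,B] there exists a finitely supported probability measure ξ⁺ on [A,B] with at most ⌊(k+2)/2⌋ support points such that ∫_A^B Ψ_i dξ⁺ = ∫_A^B Ψ_i dξ for all i = 0,…,k−1 and the matrix ∫_A^B C₂₂(x) dξ⁺(x) − ∫_A^B C₂₂(x) dξ(x) is positive semidefinite. -/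

import Mathlib

open MeasureTheory Set Matrix

/-- A family of functions `Ψ₀, …, Ψ_{k-1}` is a Chebyshev system on `[A,B]` if for all
points `A ≤ x₀ < x₁ < ⋯ < x_{k-1} ≤ B` the matrix `(Ψ i (x j))` has positive determinant. -/
def IsChebyshevSystem (A B : ℝ) {k : ℕ} (Ψ : Fin k → ℝ → ℝ) : Prop :=
  ∀ x : Fin k → ℝ, StrictMono x → (∀ j, x j ∈ Set.Icc A B) →
    0 < (Matrix.of fun i j : Fin k => Ψ i (x j)).det

/-- `ξ` is a design on `[A,B]`: a finitely supported probability measure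
`ξ = ∑_{x ∈ s} w_x δ_x` with support points `s ⊆ [A,B]` and positive weights. -/
def IsDesignOn (A B : ℝ) (ξ : Measure ℝ) (s : Finset ℝ) : Prop :=
  IsProbabilityMeasure ξ ∧ ↑s ⊆ Set.Icc A B ∧ (∀ x ∈ s, 0 < ξ {x}) ∧
    ξ = ∑ x ∈ s, ξ {x} • Measure.dirac x

/-- The entrywise integral `∫ C₂₂(x) dξ(x)` of a matrix-valued function. -/
noncomputable def matrixIntegral {p₁ : ℕ} (C : ℝ → Matrix (Fin p₁) (Fin p₁) ℝ)
    (ξ : Measure ℝ) : Matrix (Fin p₁) (Fin p₁) ℝ :=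
  Matrix.of fun a b => ∫ x, C x a b ∂ξ

open Classical in
/-- The index of a design with support `s` on `[A,B]`: the number of support points in
the open interval `(A,B)` plus one half times the number of support points among the
endpoints `{A, B}`. -/
noncomputable def designIndex (A B : ℝ) (s : Finset ℝ) : ℝ :=
  ((s.filter fun x => x ∈ Set.Ioo A B).card : ℝ) +
    ((s.filter fun x => x = A ∨ x = B).card : ℝ) / 2

namespace CCU

variable {k : ℕ}

/-- minor: determinant of the Ψ-matrix at the points `y` with slot `l` removed. -/
noncomputable def chebMinor (Ψ : Fin k → ℝ → ℝ) (y : Fin (k+1) → ℝ) (l : Fin (k+1)) : ℝ :=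
  (Matrix.of fun i j : Fin k => Ψ i (y (l.succAbove j))).det

/-- signed cofactor -/
noncomputable def chebD (Ψ : Fin k → ℝ → ℝ) (y : Fin (k+1) → ℝ) (l : Fin (k+1)) : ℝ :=
  (-1 : ℝ)^(k + (l : ℕ)) * chebMinor Ψ y l

lemma expand (Ψ : Fin k → ℝ → ℝ) (y : Fin (k+1) → ℝ) (g : ℝ → ℝ) :
    (Matrix.of fun i j : Fin (k+1) => (Fin.snoc Ψ g : Fin (k+1) → ℝ → ℝ) i (y j)).det
      = ∑ l : Fin (k+1), chebD Ψ y l * g (y l) := by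
  rw [Matrix.det_succ_row _ (Fin.last k)]
  refine Finset.sum_congr rfl fun l _ => ?_
  have h1 : (Matrix.of fun i j : Fin (k+1) => (Fin.snoc Ψ g : Fin (k+1) → ℝ → ℝ) i (y j)) (Fin.last k) l = g (y l) := by
    simp [Fin.snoc_last]
  have h2 : ((Matrix.of fun i j : Fin (k+1) => (Fin.snoc Ψ g : Fin (k+1) → ℝ → ℝ) i (y j)).submatrix
      (Fin.last k).succAbove l.succAbove) = Matrix.of fun i j : Fin k => Ψ i (y (l.succAbove j)) := by
    ext i j
    simp [Matrix.submatrix, Fin.succAbove_last, Fin.snoc_castSucc]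
  rw [h1, h2]
  unfold chebD chebMinor
  have : ((Fin.last k : Fin (k+1)) : ℕ) = k := rfl
  rw [this]
  ring

lemma sum_chebD_psi (Ψ : Fin k → ℝ → ℝ) (y : Fin (k+1) → ℝ) (i₀ : Fin k) :
    ∑ l : Fin (k+1), chebD Ψ y l * Ψ i₀ (y l) = 0 := by
  rw [← expand Ψ y (Ψ i₀)]
  refine Matrix.det_zero_of_row_eq (i := Fin.castSucc i₀) (j := Fin.last k)
    (Fin.castSucc_lt_last i₀).ne ?_
  ext j
  simp [Fin.snoc_castSucc, Fin.snoc_last]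

lemma sum_chebD_one (hk : 0 < k) (Ψ : Fin k → ℝ → ℝ) (hΨ0 : ∀ x : ℝ, Ψ ⟨0, hk⟩ x = 1)
    (y : Fin (k+1) → ℝ) : ∑ l : Fin (k+1), chebD Ψ y l = 0 := by
  have := sum_chebD_psi Ψ y ⟨0, hk⟩
  simpa [hΨ0] using this

lemma chebMinor_pos {A B : ℝ} {Ψ : Fin k → ℝ → ℝ} (hCheb : IsChebyshevSystem A B Ψ)
    {y : Fin (k+1) → ℝ} (hy : StrictMono y) (hyIcc : ∀ l, y l ∈ Set.Icc A B) (l : Fin (k+1)) :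
    0 < chebMinor Ψ y l :=
  hCheb (y ∘ l.succAbove) (hy.comp (Fin.strictMono_succAbove l)) (fun j => hyIcc _)

lemma chebD_pos {A B : ℝ} {Ψ : Fin k → ℝ → ℝ} (hCheb : IsChebyshevSystem A B Ψ)
    {y : Fin (k+1) → ℝ} (hy : StrictMono y) (hyIcc : ∀ l, y l ∈ Set.Icc A B) {l : Fin (k+1)}
    (hl : Even (k + (l : ℕ))) : 0 < chebD Ψ y l := by
  unfold chebD
  rw [hl.neg_one_pow]
  simpa using chebMinor_pos hCheb hy hyIcc l

lemma chebD_neg {A B : ℝ} {Ψ : Fin k → ℝ → ℝ} (hCheb : IsChebyshevSystem A B Ψ)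
    {y : Fin (k+1) → ℝ} (hy : StrictMono y) (hyIcc : ∀ l, y l ∈ Set.Icc A B) {l : Fin (k+1)}
    (hl : Odd (k + (l : ℕ))) : chebD Ψ y l < 0 := by
  unfold chebD
  rw [hl.neg_one_pow]
  have := chebMinor_pos hCheb hy hyIcc l
  nlinarith

lemma sum_chebD_ext {A B : ℝ} {Ψ : Fin k → ℝ → ℝ} {g : ℝ → ℝ}
    (hext : IsChebyshevSystem A B (Fin.snoc Ψ g))
    {y : Fin (k+1) → ℝ} (hy : StrictMono y) (hyIcc : ∀ l, y l ∈ Set.Icc A B) :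
    0 < ∑ l : Fin (k+1), chebD Ψ y l * g (y l) := by
  rw [← expand Ψ y g]
  exact hext y hy hyIcc

/-- weighted sum of a function over a finite design -/
noncomputable def wsum (S : Finset ℝ) (W : ℝ → ℝ) (g : ℝ → ℝ) : ℝ := ∑ x ∈ S, W x * g x

/-- The fundamental exchange move. -/
lemma move {A B : ℝ} (Ψ : Fin k → ℝ → ℝ) (hk : 0 < k)
    (S : Finset ℝ) (W : ℝ → ℝ) (hS : ↑S ⊆ Set.Icc A B)
    (hpos : ∀ x ∈ S, 0 < W x) (hW0 : ∀ x ∉ S, W x = 0)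
    (y : Fin (k+1) → ℝ) (hy : StrictMono y) (hyIcc : ∀ l, y l ∈ Set.Icc A B)
    (hDpos : ∀ l : Fin (k+1), Even (k + (l:ℕ)) → 0 < chebD Ψ y l)
    (hDneg : ∀ l : Fin (k+1), Odd (k + (l:ℕ)) → chebD Ψ y l < 0)
    (hfresh : ∀ l, y l ∉ S → Even (k + (l : ℕ))) :
    ∃ (S' : Finset ℝ) (W' : ℝ → ℝ) (t : ℝ), 0 < t ∧ ↑S' ⊆ Set.Icc A B ∧
      (∀ x ∈ S', 0 < W' x) ∧ (∀ x ∉ S', W' x = 0) ∧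
      S'.card + 1 ≤ (S ∪ Finset.image y Finset.univ).card ∧
      (∀ g : ℝ → ℝ, wsum S' W' g = wsum S W g + t * ∑ l : Fin (k+1), chebD Ψ y l * g (y l)) := by
  classical
  set d : Fin (k+1) → ℝ := chebD Ψ y with hd
  set T : Finset (Fin (k+1)) := Finset.univ.filter (fun l => Odd (k + (l:ℕ))) with hT
  have hTne : T.Nonempty := by
    refine ⟨⟨k-1, by omega⟩, ?_⟩
    simp only [hT, Finset.mem_filter, Finset.mem_univ, true_and]
    have : k + (k-1) = 2*(k-1)+1 := by omega
    rw [this]; exact odd_two_mul_add_one _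
  have hTold : ∀ l ∈ T, y l ∈ S := by
    intro l hl
    by_contra hns
    have he := hfresh l hns
    have ho : Odd (k + (l:ℕ)) := by simpa [hT] using hl
    exact (Nat.not_odd_iff_even.2 he) ho
  have hTd : ∀ l ∈ T, d l < 0 := by
    intro l hl; exact hDneg l (by simpa [hT] using hl)
  set t : ℝ := T.inf' hTne (fun l => W (y l) / (-(d l))) with ht
  have htpos : 0 < t := by
    rw [ht, Finset.lt_inf'_iff]
    intro l hl
    exact div_pos (hpos _ (hTold l hl)) (by linarith [hTd l hl])
  have htle : ∀ l ∈ T, 0 ≤ W (y l) + t * d l := by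
    intro l hl
    have h1 : t ≤ W (y l) / (-(d l)) := Finset.inf'_le _ hl
    have h2 : 0 < -(d l) := by linarith [hTd l hl]
    nlinarith [(le_div_iff₀ h2).1 h1]
  obtain ⟨l₀, hl₀T, hl₀⟩ := Finset.exists_mem_eq_inf' hTne (fun l => W (y l) / (-(d l)))
  set dd : ℝ → ℝ := fun x => ∑ l ∈ Finset.univ.filter (fun l => y l = x), d l with hdd
  have hinj : Function.Injective y := hy.injective
  have hddy : ∀ l, dd (y l) = d l := by
    intro l
    rw [hdd]
    have : Finset.univ.filter (fun l' => y l' = y l) = {l} := by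
      ext l'; simp [Finset.mem_filter, hinj.eq_iff]
    simp [this]
  have hddo : ∀ x, x ∉ Finset.image y Finset.univ → dd x = 0 := by
    intro x hx
    rw [hdd]
    have : Finset.univ.filter (fun l' => y l' = x) = ∅ := by
      ext l'; simp only [Finset.mem_filter, Finset.mem_univ, true_and, Finset.notMem_empty,
        iff_false]
      intro h; exact hx (by simp [← h])
    simp [this]
  set W' : ℝ → ℝ := fun x => W x + t * dd x with hW'
  set U : Finset ℝ := S ∪ Finset.image y Finset.univ with hU
  set S' : Finset ℝ := U.filter (fun x => 0 < W' x) with hS'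
  have hUicc : ↑U ⊆ Set.Icc A B := by
    intro x hx
    rcases Finset.mem_union.1 hx with h | h
    · exact hS h
    · obtain ⟨l, _, rfl⟩ := Finset.mem_image.1 h; exact hyIcc l
  have hW'nonneg : ∀ x ∈ U, 0 ≤ W' x := by
    intro x hx
    simp only [hW']
    by_cases him : x ∈ Finset.image y Finset.univ
    · obtain ⟨l, _, rfl⟩ := Finset.mem_image.1 him
      rw [hddy l]
      rcases Nat.even_or_odd (k + (l:ℕ)) with he | ho
      · have hd0 : 0 < d l := hDpos l he
        have hw0 : 0 ≤ W (y l) := by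
          by_cases hyS : y l ∈ S
          · exact (hpos _ hyS).le
          · exact (hW0 _ hyS).ge.trans (le_refl _) |>.trans_eq rfl
        nlinarith
      · exact htle l (by simp [hT, ho])
    · have hxS : x ∈ S := by
        rcases Finset.mem_union.1 hx with h | h
        · exact h
        · exact absurd h him
      rw [hddo x him]
      simpa using (hpos x hxS).le
  have hW'zero : ∀ x ∉ S', W' x = 0 := by
    intro x hx
    by_cases hxU : x ∈ U
    · have : ¬ 0 < W' x := by
        intro hc; exact hx (Finset.mem_filter.2 ⟨hxU, hc⟩)
      have := hW'nonneg x hxU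
      linarith
    · have hxS : x ∉ S := fun h => hxU (Finset.mem_union.2 (Or.inl h))
      have hxim : x ∉ Finset.image y Finset.univ := fun h => hxU (Finset.mem_union.2 (Or.inr h))
      simp only [hW', hW0 x hxS, hddo x hxim]; ring
  refine ⟨S', W', t, htpos, ?_, ?_, hW'zero, ?_, ?_⟩
  · intro x hx
    exact hUicc (Finset.mem_filter.1 (by exact hx)).1
  · intro x hx; exact (Finset.mem_filter.1 hx).2
  · have hdied : W' (y l₀) = 0 := by
      have htv : t = W (y l₀) / -d l₀ := hl₀
      simp only [hW']
      rw [hddy l₀, htv]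
      have h2 : d l₀ < 0 := hTd l₀ hl₀T
      have hne : d l₀ ≠ 0 := ne_of_lt h2
      have hx : W (y l₀) / -d l₀ * d l₀ = -W (y l₀) := by
        rw [div_neg, neg_mul, div_mul_eq_mul_div, mul_div_assoc, div_self hne, mul_one]
      linarith [hx]
    have hyU : y l₀ ∈ U := Finset.mem_union.2 (Or.inr (Finset.mem_image.2 ⟨l₀, Finset.mem_univ _, rfl⟩))
    have hsub : S' ⊆ U.erase (y l₀) := by
      intro x hx
      rcases Finset.mem_filter.1 hx with ⟨hxU, hxp⟩
      refine Finset.mem_erase.2 ⟨?_, hxU⟩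
      rintro rfl; rw [hdied] at hxp; exact lt_irrefl 0 hxp
    have := Finset.card_le_card hsub
    rw [Finset.card_erase_of_mem hyU] at this
    have hUpos : 0 < U.card := Finset.card_pos.2 ⟨_, hyU⟩
    omega
  · intro g
    have step1 : wsum S' W' g = ∑ x ∈ U, W' x * g x := by
      unfold wsum
      refine Finset.sum_subset (Finset.filter_subset _ _) ?_
      intro x hxU hxS'
      rw [hW'zero x hxS']; ring
    have step2 : ∑ x ∈ U, W' x * g x = ∑ x ∈ U, W x * g x + t * ∑ x ∈ U, dd x * g x := by
      rw [Finset.mul_sum, ← Finset.sum_add_distrib]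
      refine Finset.sum_congr rfl fun x _ => ?_
      simp only [hW']; ring
    have step3 : ∑ x ∈ U, W x * g x = wsum S W g := by
      unfold wsum
      refine (Finset.sum_subset (Finset.subset_union_left) ?_).symm
      intro x _ hxS; rw [hW0 x hxS]; ring
    have step4 : ∑ x ∈ U, dd x * g x = ∑ l : Fin (k+1), d l * g (y l) := by
      have e1 : ∑ x ∈ U, dd x * g x = ∑ x ∈ Finset.image y Finset.univ, dd x * g x := by
        refine (Finset.sum_subset Finset.subset_union_right ?_).symm
        intro x _ hx; rw [hddo x hx]; ring
      have e2 : ∑ x ∈ Finset.image y Finset.univ, dd x * g x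
          = ∑ l : Fin (k+1), dd (y l) * g (y l) :=
        Finset.sum_image (fun a _ b _ h => hinj h)
      rw [e1, e2]
      exact Finset.sum_congr rfl fun l _ => by rw [hddy l]
    rw [step1, step2, step3, step4]

lemma pattern_aux {k : ℕ} (hk : 0 < k) (A B : ℝ) (S : Finset ℝ)
    (hS : ↑S ⊆ Set.Icc A B)
    (hj1 : (k+2)/2 + 1 ≤ S.card) (hj2 : S.card ≤ k) :
    ∃ y : Fin (k+1) → ℝ, StrictMono y ∧ (∀ l, y l ∈ Set.Icc A B) ∧
      (∀ a ∈ S, ∃ l, y l = a) ∧ (∀ l : Fin (k+1), y l ∉ S → Even (k + (l:ℕ))) := by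
  classical
  set j := S.card with hj
  have h2j : 2*j ≥ k+3 := by omega
  set φ := k+1-j with hφ
  set r := 2*j-(k+2) with hr
  have hφ1 : 1 ≤ φ := by omega
  have hr1 : 1 ≤ r := by omega
  have hrφ : r + 2*φ = k := by omega
  have hrj : r + φ + 1 = j := by omega
  have hj2' : 2 ≤ j := by omega
  set e := S.orderIsoOfFin hj.symm with he
  set xe : ℕ → ℝ := fun n => if h : n < j then (e ⟨n, h⟩ : ℝ) else 0 with hxe
  have xe_mem : ∀ n, n < j → xe n ∈ S := by
    intro n hn; rw [hxe]; simp only [hn, dif_pos]; exact (e ⟨n, hn⟩).2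
  have xe_mono : ∀ a b, a < b → b < j → xe a < xe b := by
    intro a b hab hbj
    have haj : a < j := hab.trans hbj
    rw [hxe]; simp only [haj, hbj, dif_pos]
    exact_mod_cast e.strictMono (show (⟨a, haj⟩ : Fin j) < ⟨b, hbj⟩ from hab)
  have xe_cover : ∀ a ∈ S, ∃ n, n < j ∧ xe n = a := by
    intro a ha
    obtain ⟨n, hn⟩ := e.surjective ⟨a, ha⟩
    exact ⟨(n : ℕ), n.2, by rw [hxe]; simp only [n.2, dif_pos]; rw [Fin.eta, hn]⟩
  set Y : ℕ → ℝ := fun l =>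
    if l < r then xe l
    else if l = k then xe (j-1)
    else if (l - r) % 2 = 1 then xe (r + (l-r)/2)
    else (xe (r + (l-r)/2 - 1) + xe (r + (l-r)/2))/2 with hY
  have YA : ∀ n, n < r → Y n = xe n := by
    intro n h; rw [hY]; simp only [h, if_pos]
  have YK : Y k = xe (j-1) := by
    rw [hY]; simp only [show ¬ (k < r) by omega, if_false, if_pos, if_true, eq_self_iff_true]
  have YO : ∀ n, ¬ n < r → n ≠ k → (n-r) % 2 = 1 → Y n = xe (r+(n-r)/2) := by
    intro n h1 h2 h3; rw [hY]
    simp only [h1, if_false, h2, if_false, h3, if_pos]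
  have YF : ∀ n, ¬ n < r → n ≠ k → (n-r) % 2 = 0 →
      Y n = (xe (r+(n-r)/2-1) + xe (r+(n-r)/2))/2 := by
    intro n h1 h2 h3; rw [hY]
    simp only [h1, if_false, h2, if_false, show ¬ ((n-r) % 2 = 1) by omega, if_false]
  have hadj : ∀ l, l + 1 ≤ k → Y l < Y (l+1) := by
    intro l hlk
    rcases lt_trichotomy (l+1) r with h1 | h1 | h1
    · rw [YA l (by omega), YA (l+1) h1]
      exact xe_mono l (l+1) (by omega) (by omega)
    · -- l+1 = r : fresh at slot r
      rw [YA l (by omega), YF (l+1) (by omega) (by omega) (by omega)]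
      rw [show (l+1-r)/2 = 0 by omega, show r + 0 = r by omega]
      have h4 : xe (r - 1) < xe r := xe_mono (r-1) r (by omega) (by omega)
      rw [show l = r - 1 by omega]
      linarith
    · have hlr : r ≤ l := by omega
      rcases Nat.lt_or_ge (l+1) k with hk1 | hk1
      · rcases Nat.even_or_odd (l-r) with hqe | hqo
        · have hq1 : (l - r) % 2 = 0 := Nat.even_iff.1 hqe
          rw [YF l (by omega) (by omega) hq1,
            YO (l+1) (by omega) (by omega) (by omega),
            show (l+1-r)/2 = (l-r)/2 by omega]
          have h4 : xe (r + (l-r)/2 - 1) < xe (r + (l-r)/2) :=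
            xe_mono _ _ (by omega) (by omega)
          linarith
        · have hq1 : (l - r) % 2 = 1 := Nat.odd_iff.1 hqo
          rw [YO l (by omega) (by omega) hq1,
            YF (l+1) (by omega) (by omega) (by omega),
            show (l+1-r)/2 = (l-r)/2 + 1 by omega]
          have h4 : xe (r + ((l-r)/2+1) - 1) < xe (r + ((l-r)/2+1)) :=
            xe_mono _ _ (by omega) (by omega)
          rw [show r + (l-r)/2 = r + ((l-r)/2+1) - 1 by omega]
          linarith
      · have hl1k : l + 1 = k := by omega
        rw [YO l (by omega) (by omega) (by omega), hl1k, YK,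
          show r + (l-r)/2 = j - 2 by omega]
        exact xe_mono (j-2) (j-1) (by omega) (by omega)
  have hmono : ∀ b, b ≤ k → ∀ a, a < b → Y a < Y b := by
    intro b
    induction b with
    | zero => intro _ a ha; omega
    | succ n ih =>
      intro hnk a ha
      rcases Nat.lt_or_ge a n with h | h
      · exact (ih (by omega) a h).trans (hadj n (by omega))
      · have : a = n := by omega
        subst this
        exact hadj a (by omega)
  refine ⟨fun l => Y (l : ℕ), ?_, ?_, ?_, ?_⟩
  · intro a b hab
    exact hmono (b : ℕ) (by omega) (a : ℕ) (by exact_mod_cast hab)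
  · intro l
    have hlle : (l : ℕ) ≤ k := by omega
    set n := (l : ℕ) with hn
    show Y n ∈ Set.Icc A B
    by_cases h1 : n < r
    · rw [YA n h1]; exact hS (xe_mem n (by omega))
    by_cases h2 : n = k
    · rw [h2, YK]; exact hS (xe_mem (j-1) (by omega))
    by_cases h3 : (n - r) % 2 = 1
    · rw [YO n h1 h2 h3]; exact hS (xe_mem _ (by omega))
    · rw [YF n h1 h2 (by omega)]
      have m1 := hS (xe_mem (r + (n-r)/2 - 1) (by omega))
      have m2 := hS (xe_mem (r + (n-r)/2) (by omega))
      rw [Set.mem_Icc] at m1 m2 ⊢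
      constructor
      · linarith [m1.1, m2.1]
      · linarith [m1.2, m2.2]
  · intro a ha
    obtain ⟨n, hnj, hxen⟩ := xe_cover a ha
    rcases Nat.lt_or_ge n r with h1 | h1
    · refine ⟨⟨n, by omega⟩, ?_⟩
      show Y n = a
      rw [YA n h1]; exact hxen
    rcases Nat.lt_or_ge n (j-1) with h2 | h2
    · refine ⟨⟨r + 2*(n-r) + 1, by omega⟩, ?_⟩
      show Y (r + 2*(n-r) + 1) = a
      rw [YO (r + 2*(n-r) + 1) (by omega) (by omega) (by omega),
        show r + (r + 2*(n-r) + 1 - r)/2 = n by omega]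
      exact hxen
    · refine ⟨⟨k, by omega⟩, ?_⟩
      show Y k = a
      rw [YK, show j - 1 = n by omega]
      exact hxen
  · intro l hl
    set n := (l : ℕ) with hn
    have hnk : n ≤ k := by omega
    by_contra hodd
    apply hl
    show Y n ∈ S
    by_cases h1 : n < r
    · rw [YA n h1]; exact xe_mem n (by omega)
    by_cases h2 : n = k
    · rw [h2, YK]; exact xe_mem (j-1) (by omega)
    · have h3 : (n - r) % 2 = 1 := by
        rcases Nat.even_or_odd (n - r) with he | ho
        · exfalso
          apply hodd
          rcases he with ⟨c, hc⟩
          exact ⟨r + φ + c, by omega⟩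
        · exact Nat.odd_iff.1 ho
      rw [YO n h1 h2 h3]
      exact xe_mem _ (by omega)


/-- Exchange move when the support is large: strictly fewer support points. -/
lemma improve_big {A B : ℝ} (Ψ : Fin k → ℝ → ℝ) (hk : 0 < k)
    (hCheb : IsChebyshevSystem A B Ψ)
    (S : Finset ℝ) (W : ℝ → ℝ) (hS : ↑S ⊆ Set.Icc A B)
    (hpos : ∀ x ∈ S, 0 < W x) (hW0 : ∀ x ∉ S, W x = 0)
    (hbig : k + 1 ≤ S.card) :
    ∃ (S' : Finset ℝ) (W' : ℝ → ℝ) (t : ℝ) (y : Fin (k+1) → ℝ), 0 < t ∧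
      StrictMono y ∧ (∀ l, y l ∈ Set.Icc A B) ∧
      ↑S' ⊆ Set.Icc A B ∧ (∀ x ∈ S', 0 < W' x) ∧ (∀ x ∉ S', W' x = 0) ∧
      S'.card + 1 ≤ S.card ∧
      (∀ g : ℝ → ℝ, wsum S' W' g = wsum S W g + t * ∑ l : Fin (k+1), chebD Ψ y l * g (y l)) := by
  classical
  obtain ⟨S₁, hS₁sub, hS₁card⟩ := Finset.exists_subset_card_eq hbig
  set e := S₁.orderIsoOfFin hS₁card with he
  set y : Fin (k+1) → ℝ := fun l => ((e l : ℝ)) with hy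
  have hymono : StrictMono y := by
    intro a b hab
    have := e.strictMono hab
    exact_mod_cast this
  have hymem : ∀ l, y l ∈ S := fun l => hS₁sub (e l).2
  have hyIcc : ∀ l, y l ∈ Set.Icc A B := fun l => hS (hymem l)
  obtain ⟨S', W', t, ht, hIcc', hpos', hzero', hcard', hiden⟩ :=
    move Ψ hk S W hS hpos hW0 y hymono hyIcc
      (fun l hl => chebD_pos hCheb hymono hyIcc hl)
      (fun l hl => chebD_neg hCheb hymono hyIcc hl)
      (fun l hl => absurd (hymem l) hl)
  have himg : Finset.image y Finset.univ ⊆ S := fun x hx => by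
    obtain ⟨l, _, rfl⟩ := Finset.mem_image.1 hx; exact hymem l
  have hun : S ∪ Finset.image y Finset.univ = S := Finset.union_eq_left.2 himg
  rw [hun] at hcard'
  exact ⟨S', W', t, y, ht, hymono, hyIcc, hIcc', hpos', hzero', hcard', hiden⟩

/-- Exchange move when the support is of moderate size: down to at most `k` points. -/
lemma improve_small {A B : ℝ} (Ψ : Fin k → ℝ → ℝ) (hk : 0 < k)
    (hCheb : IsChebyshevSystem A B Ψ)
    (S : Finset ℝ) (W : ℝ → ℝ) (hS : ↑S ⊆ Set.Icc A B)
    (hpos : ∀ x ∈ S, 0 < W x) (hW0 : ∀ x ∉ S, W x = 0)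
    (hc1 : (k+2)/2 + 1 ≤ S.card) (hc2 : S.card ≤ k) :
    ∃ (S' : Finset ℝ) (W' : ℝ → ℝ) (t : ℝ) (y : Fin (k+1) → ℝ), 0 < t ∧
      StrictMono y ∧ (∀ l, y l ∈ Set.Icc A B) ∧
      ↑S' ⊆ Set.Icc A B ∧ (∀ x ∈ S', 0 < W' x) ∧ (∀ x ∉ S', W' x = 0) ∧
      S'.card ≤ k ∧
      (∀ g : ℝ → ℝ, wsum S' W' g = wsum S W g + t * ∑ l : Fin (k+1), chebD Ψ y l * g (y l)) := by
  classical
  obtain ⟨y, hymono, hyIcc, hcover, hfresh⟩ := pattern_aux hk A B S hS hc1 hc2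
  obtain ⟨S', W', t, ht, hIcc', hpos', hzero', hcard', hiden⟩ :=
    move Ψ hk S W hS hpos hW0 y hymono hyIcc
      (fun l hl => chebD_pos hCheb hymono hyIcc hl)
      (fun l hl => chebD_neg hCheb hymono hyIcc hl)
      hfresh
  have hsub : S ∪ Finset.image y Finset.univ = Finset.image y Finset.univ := by
    refine Finset.union_eq_right.2 ?_
    intro a ha
    obtain ⟨l, hl⟩ := hcover a ha
    exact Finset.mem_image.2 ⟨l, Finset.mem_univ _, hl⟩
  rw [hsub] at hcard'
  have himgcard : (Finset.image y Finset.univ).card ≤ k + 1 :=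
    Finset.card_image_le.trans (by simp)
  exact ⟨S', W', t, y, ht, hymono, hyIcc, hIcc', hpos', hzero', by omega, hiden⟩

/-- Reduce any design to one with at most `k+1` support points, preserving the
`Ψ`-moments and weakly improving all Chebyshev extensions. -/
lemma reduce {A B : ℝ} (Ψ : Fin k → ℝ → ℝ) (hk : 0 < k)
    (hCheb : IsChebyshevSystem A B Ψ) :
    ∀ (n : ℕ) (S : Finset ℝ) (W : ℝ → ℝ), S.card ≤ n → ↑S ⊆ Set.Icc A B →
    (∀ x ∈ S, 0 < W x) → (∀ x ∉ S, W x = 0) →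
    ∃ (S' : Finset ℝ) (W' : ℝ → ℝ),
      ↑S' ⊆ Set.Icc A B ∧ (∀ x ∈ S', 0 < W' x) ∧ (∀ x ∉ S', W' x = 0) ∧
      S'.card ≤ k + 1 ∧
      (∀ i, wsum S' W' (Ψ i) = wsum S W (Ψ i)) ∧
      (∀ g : ℝ → ℝ, IsChebyshevSystem A B (Fin.snoc Ψ g) → wsum S W g ≤ wsum S' W' g) := by
  intro n
  induction n with
  | zero =>
    intro S W hcard hS hpos hW0
    exact ⟨S, W, hS, hpos, hW0, by omega, fun i => rfl, fun g _ => le_refl _⟩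
  | succ n ih =>
    intro S W hcard hS hpos hW0
    by_cases hsmall : S.card ≤ k + 1
    · exact ⟨S, W, hS, hpos, hW0, hsmall, fun i => rfl, fun g _ => le_refl _⟩
    · obtain ⟨S', W', t, y, ht, hymono, hyIcc, hIcc', hpos', hzero', hcard', hiden⟩ :=
        improve_big Ψ hk hCheb S W hS hpos hW0 (by omega)
      obtain ⟨S'', W'', hIcc'', hpos'', hzero'', hcard'', hmom'', hext''⟩ :=
        ih S' W' (by omega) hIcc' hpos' hzero'
      refine ⟨S'', W'', hIcc'', hpos'', hzero'', hcard'', ?_, ?_⟩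
      · intro i
        rw [hmom'' i, hiden (Ψ i), sum_chebD_psi, mul_zero, add_zero]
      · intro g hg
        refine le_trans ?_ (hext'' g hg)
        rw [hiden g]
        have := sum_chebD_ext hg hymono hyIcc
        nlinarith

lemma integrable_dirac'' (f : ℝ → ℝ) (a : ℝ) : Integrable f (Measure.dirac a) := by
  have h : f =ᵐ[Measure.dirac a] fun _ => f a := by
    rw [Filter.EventuallyEq, MeasureTheory.ae_dirac_eq]
    simp
  refine ⟨aestronglyMeasurable_const.congr h.symm, ?_⟩
  rw [hasFiniteIntegral_congr h]
  simp [HasFiniteIntegral, MeasureTheory.lintegral_dirac]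

lemma integral_sum_dirac (S : Finset ℝ) (c : ℝ → ENNReal) (hc : ∀ x ∈ S, c x ≠ ⊤)
    (g : ℝ → ℝ) :
    ∫ x, g x ∂(∑ x ∈ S, c x • Measure.dirac x) = ∑ x ∈ S, (c x).toReal * g x := by
  rw [MeasureTheory.integral_finset_sum_measure
    (fun i hi => (integrable_dirac'' g i).smul_measure (hc i hi))]
  refine Finset.sum_congr rfl fun x _ => ?_
  rw [MeasureTheory.integral_smul_measure, MeasureTheory.integral_dirac]
  simp [smul_eq_mul]

lemma sum_dirac_apply (S : Finset ℝ) (c : ℝ → ENNReal) {x : ℝ} (hx : x ∈ S) :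
    (∑ x' ∈ S, c x' • Measure.dirac x') {x} = c x := by
  rw [MeasureTheory.Measure.finset_sum_apply]
  have h0 : ∀ x' ∈ S, (c x' • Measure.dirac x') {x}
      = if x' = x then c x' else 0 := by
    intro x' _
    rw [MeasureTheory.Measure.smul_apply,
      MeasureTheory.Measure.dirac_apply' _ (measurableSet_singleton x)]
    by_cases h : x' = x
    · simp [h]
    · simp [Set.indicator, h]
  rw [Finset.sum_congr rfl h0, Finset.sum_ite_eq' S x c]
  simp [hx]

lemma sum_dirac_univ (S : Finset ℝ) (c : ℝ → ENNReal) :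
    (∑ x' ∈ S, c x' • Measure.dirac x') Set.univ = ∑ x' ∈ S, c x' := by
  rw [MeasureTheory.Measure.finset_sum_apply]
  refine Finset.sum_congr rfl fun x _ => ?_
  rw [MeasureTheory.Measure.smul_apply]
  simp

lemma encode {A B : ℝ} (hAB : A ≤ B) (S : Finset ℝ) (W : ℝ → ℝ)
    (hS : ↑S ⊆ Set.Icc A B) (hcard : S.card ≤ k+1) (hW : ∀ x ∈ S, 0 ≤ W x) :
    ∃ p : (Fin (k+1) → ℝ) × (Fin (k+1) → ℝ),
      (∀ l, 0 ≤ p.1 l) ∧ (∀ l, p.2 l ∈ Set.Icc A B) ∧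
      (∀ g : ℝ → ℝ, (∑ l : Fin (k+1), p.1 l * g (p.2 l)) = wsum S W g) := by
  classical
  set n := S.card with hn
  set e := S.orderIsoOfFin hn.symm with he
  refine ⟨(fun l => if h : (l:ℕ) < n then W (e ⟨(l:ℕ), h⟩) else 0,
    fun l => if h : (l:ℕ) < n then ((e ⟨(l:ℕ), h⟩ : ℝ)) else A), ?_, ?_, ?_⟩
  · intro l
    by_cases h : (l:ℕ) < n
    · simp only [h, dif_pos]
      exact hW _ (e ⟨(l:ℕ), h⟩).2
    · simp only [h, dif_neg, not_false_iff, le_refl]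
  · intro l
    by_cases h : (l:ℕ) < n
    · simp only [h, dif_pos]
      exact hS (e ⟨(l:ℕ), h⟩).2
    · simp only [h, dif_neg, not_false_iff]
      exact ⟨le_refl A, hAB⟩
  · intro g
    set F : ℕ → ℝ := fun i => if h : i < n then W (e ⟨i,h⟩) * g ((e ⟨i,h⟩ : ℝ)) else 0 with hF
    have h1 : (∑ l : Fin (k+1),
        (if h : (l:ℕ) < n then W (e ⟨(l:ℕ), h⟩) else 0) *
          g (if h : (l:ℕ) < n then ((e ⟨(l:ℕ), h⟩ : ℝ)) else A)) = ∑ l : Fin (k+1), F (l:ℕ) := by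
      refine Finset.sum_congr rfl fun l _ => ?_
      by_cases h : (l:ℕ) < n
      · simp only [h, dif_pos, hF]
      · simp only [h, dif_neg, not_false_iff, hF, zero_mul]
    rw [h1]
    rw [Fin.sum_univ_eq_sum_range F (k+1)]
    have h2 : ∑ i ∈ Finset.range (k+1), F i = ∑ i ∈ Finset.range n, F i := by
      refine (Finset.sum_subset (Finset.range_subset_range.2 (by omega)) ?_).symm
      intro i _ hi
      rw [Finset.mem_range, not_lt] at hi
      simp only [hF, dif_neg (by omega : ¬ i < n)]
    rw [h2, ← Fin.sum_univ_eq_sum_range F n]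
    have h3 : ∑ i : Fin n, F (i : ℕ) = ∑ i : Fin n, W (e i) * g ((e i : ℝ)) := by
      refine Finset.sum_congr rfl fun i _ => ?_
      simp only [hF, i.2, dif_pos, Fin.eta]
    rw [h3]
    have h4 : ∑ i : Fin n, W (e i) * g ((e i : ℝ))
        = ∑ x : {x // x ∈ S}, W x * g (x : ℝ) :=
      Fintype.sum_equiv e.toEquiv _ _ (fun i => rfl)
    rw [h4]
    exact Finset.sum_coe_sort S (fun x => W x * g x)

lemma decode (p : (Fin (k+1) → ℝ) × (Fin (k+1) → ℝ)) (hw : ∀ l, 0 ≤ p.1 l) :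
    ∃ (S : Finset ℝ) (W : ℝ → ℝ),
      (∀ x ∈ S, 0 < W x) ∧ (∀ x ∉ S, W x = 0) ∧ S.card ≤ k+1 ∧
      (∀ x ∈ S, ∃ l, p.2 l = x) ∧
      (∀ g : ℝ → ℝ, wsum S W g = ∑ l : Fin (k+1), p.1 l * g (p.2 l)) := by
  classical
  set F : Finset (Fin (k+1)) := Finset.univ.filter (fun l => 0 < p.1 l) with hFd
  set S : Finset ℝ := F.image p.2 with hSd
  set W : ℝ → ℝ := fun x => ∑ l ∈ Finset.univ.filter (fun l => p.2 l = x), p.1 l with hWd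
  have hWF : ∀ x, W x = ∑ l ∈ F.filter (fun l => p.2 l = x), p.1 l := by
    intro x
    rw [hWd]
    refine (Finset.sum_subset ?_ ?_).symm
    · intro l hl
      rcases Finset.mem_filter.1 hl with ⟨hlF, hlx⟩
      exact Finset.mem_filter.2 ⟨Finset.mem_univ _, hlx⟩
    · intro l hl hl'
      rcases Finset.mem_filter.1 hl with ⟨_, hlx⟩
      by_contra hne
      have hpl : 0 < p.1 l := lt_of_le_of_ne (hw l) (Ne.symm hne)
      exact hl' (Finset.mem_filter.2 ⟨Finset.mem_filter.2 ⟨Finset.mem_univ _, hpl⟩, hlx⟩)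
  refine ⟨S, W, ?_, ?_, ?_, ?_, ?_⟩
  · rintro x hx
    obtain ⟨l₁, hl₁F, rfl⟩ := Finset.mem_image.1 hx
    rw [hWF]
    refine Finset.sum_pos' (fun l hl => hw l) ⟨l₁, ?_, (Finset.mem_filter.1 hl₁F).2⟩
    exact Finset.mem_filter.2 ⟨hl₁F, rfl⟩
  · intro x hx
    rw [hWF]
    refine Finset.sum_eq_zero fun l hl => ?_
    rcases Finset.mem_filter.1 hl with ⟨hlF, hlx⟩
    exact absurd (Finset.mem_image.2 ⟨l, hlF, hlx⟩) hx
  · calc S.card ≤ F.card := Finset.card_image_le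
    _ ≤ (Finset.univ : Finset (Fin (k+1))).card := Finset.card_filter_le _ _
    _ = k+1 := by simp
  · intro x hx
    obtain ⟨l, _, hl⟩ := Finset.mem_image.1 hx
    exact ⟨l, hl⟩
  · intro g
    have h1 : (∑ l : Fin (k+1), p.1 l * g (p.2 l)) = ∑ l ∈ F, p.1 l * g (p.2 l) := by
      refine (Finset.sum_subset (Finset.filter_subset _ _) ?_).symm
      intro l _ hl
      have : ¬ 0 < p.1 l := fun hc => hl (Finset.mem_filter.2 ⟨Finset.mem_univ _, hc⟩)
      have : p.1 l = 0 := le_antisymm (not_lt.1 this) (hw l)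
      rw [this, zero_mul]
    have h2 : ∑ l ∈ F, p.1 l * g (p.2 l)
        = ∑ x ∈ S, ∑ l ∈ F.filter (fun l => p.2 l = x), p.1 l * g (p.2 l) :=
      (Finset.sum_fiberwise_of_maps_to (fun l hl => Finset.mem_image_of_mem p.2 hl) _).symm
    have h3 : ∀ x ∈ S, ∑ l ∈ F.filter (fun l => p.2 l = x), p.1 l * g (p.2 l) = W x * g x := by
      intro x _
      rw [hWF, Finset.sum_mul]
      refine Finset.sum_congr rfl fun l hl => ?_
      rw [(Finset.mem_filter.1 hl).2]
    rw [h1, h2]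
    exact Finset.sum_congr rfl (fun x hx => (h3 x hx).symm)

lemma quad_wsum {p₁ : ℕ} (C : ℝ → Matrix (Fin p₁) (Fin p₁) ℝ) (S : Finset ℝ) (W : ℝ → ℝ)
    (Q : Fin p₁ → ℝ) :
    Q ⬝ᵥ ((Matrix.of fun a b => wsum S W fun x => C x a b) *ᵥ Q)
      = wsum S W (fun x => Q ⬝ᵥ (C x *ᵥ Q)) := by
  unfold wsum
  simp only [dotProduct, mulVec, Matrix.of_apply]
  have lhs1 : (∑ a, Q a * ∑ b, (∑ x ∈ S, W x * C x a b) * Q b)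
      = ∑ a, ∑ b, ∑ x ∈ S, Q a * (W x * C x a b * Q b) := by
    refine Finset.sum_congr rfl fun a _ => ?_
    rw [Finset.mul_sum]
    refine Finset.sum_congr rfl fun b _ => ?_
    rw [Finset.sum_mul, Finset.mul_sum]
  rw [lhs1]
  have lhs2 : (∑ a, ∑ b, ∑ x ∈ S, Q a * (W x * C x a b * Q b))
      = ∑ x ∈ S, ∑ a, ∑ b, Q a * (W x * C x a b * Q b) := by
    have e1 : ∀ a : Fin p₁, (∑ b, ∑ x ∈ S, Q a * (W x * C x a b * Q b))
        = ∑ x ∈ S, ∑ b, Q a * (W x * C x a b * Q b) := fun a => Finset.sum_comm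
    rw [Finset.sum_congr rfl (fun a _ => e1 a)]
    exact Finset.sum_comm
  rw [lhs2]
  refine Finset.sum_congr rfl fun x _ => ?_
  rw [Finset.mul_sum]
  refine Finset.sum_congr rfl fun a _ => ?_
  rw [Finset.mul_sum, Finset.mul_sum]
  refine Finset.sum_congr rfl fun b _ => ?_
  ring

end CCU

/-- Yang–Stufken complete class theorem, part (1): if `{Ψ₀,…,Ψ_{k-1}}` (with `Ψ₀ ≡ 1`)
and all extensions by `x ↦ QᵀC₂₂(x)Q` are Chebyshev systems, then every design `ξ` is
dominated by a design `ξ⁺` with at most `⌊(k+2)/2⌋` support points having the same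
`Ψ`-moments and `∫ C₂₂ dξ⁺ - ∫ C₂₂ dξ` positive semidefinite. -/
theorem complete_class_upper
    {k p₁ : ℕ} (hk : 0 < k) (hp : 1 ≤ p₁) (A B : ℝ) (hAB : A < B)
    (Ψ : Fin k → ℝ → ℝ) (C : ℝ → Matrix (Fin p₁) (Fin p₁) ℝ)
    (hΨ0 : ∀ x : ℝ, Ψ ⟨0, hk⟩ x = 1)
    (hcontΨ : ∀ i, ContinuousOn (Ψ i) (Set.Icc A B))
    (hcontC : ∀ a b, ContinuousOn (fun x => C x a b) (Set.Icc A B))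
    (hsymm : ∀ x ∈ Set.Icc A B, (C x).IsSymm)
    (hCheb : IsChebyshevSystem A B Ψ)
    (hChebQ : ∀ Q : Fin p₁ → ℝ, Q ≠ 0 →
      IsChebyshevSystem A B (Fin.snoc Ψ fun x => Q ⬝ᵥ ((C x) *ᵥ Q)))
    (ξ : Measure ℝ) (s : Finset ℝ) (hξ : IsDesignOn A B ξ s) :
    ∃ (ξp : Measure ℝ) (sp : Finset ℝ), IsDesignOn A B ξp sp ∧
      sp.card ≤ (k + 2) / 2 ∧
      (∀ i, ∫ x, Ψ i x ∂ξp = ∫ x, Ψ i x ∂ξ) ∧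
      (matrixIntegral C ξp - matrixIntegral C ξ).PosSemidef := by
  classical
  obtain ⟨hprob, hsIcc, hspos, hrepr⟩ := hξ
  set fQ : (Fin p₁ → ℝ) → ℝ → ℝ := fun Q x => Q ⬝ᵥ ((C x) *ᵥ Q) with hfQ
  set f₀ : ℝ → ℝ := fun x => ∑ a, C x a a with hf₀
  set Wξ : ℝ → ℝ := fun x => if x ∈ s then (ξ {x}).toReal else 0 with hWξ
  have hint : ∀ g : ℝ → ℝ, ∫ x, g x ∂ξ = CCU.wsum s Wξ g := by
    intro g
    rw [hrepr, CCU.integral_sum_dirac s _ (fun x _ => measure_ne_top ξ {x}) g]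
    unfold CCU.wsum
    refine Finset.sum_congr rfl fun x hx => ?_
    simp only [hWξ]; simp only [hx, if_pos]
  have hWξpos : ∀ x ∈ s, 0 < Wξ x := by
    intro x hx
    simp only [hWξ]; simp only [hx, if_pos]
    exact ENNReal.toReal_pos (hspos x hx).ne' (measure_ne_top ξ {x})
  have hWξ0 : ∀ x ∉ s, Wξ x = 0 := by
    intro x hx; simp only [hWξ]; simp [hx]
  set cmom : Fin k → ℝ := fun i => CCU.wsum s Wξ (Ψ i) with hcmom
  set γ : (Fin p₁ → ℝ) → ℝ := fun Q => CCU.wsum s Wξ (fQ Q) with hγ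
  have hmass1 : cmom ⟨0, hk⟩ = 1 := by
    simp only [hcmom]
    rw [← hint (Ψ ⟨0,hk⟩)]
    have h1 : ∫ x, Ψ ⟨0,hk⟩ x ∂ξ = ∫ _x, (1:ℝ) ∂ξ := by
      refine integral_congr_ae (Filter.Eventually.of_forall fun x => hΨ0 x)
    rw [h1]
    simp [measure_univ]
  have hfQ0 : ∀ x : ℝ, fQ 0 x = 0 := by
    intro x; simp only [hfQ]; simp
  have hwsumfQ0 : ∀ (S : Finset ℝ) (W : ℝ → ℝ), CCU.wsum S W (fQ 0) = 0 := by
    intro S W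
    unfold CCU.wsum
    refine Finset.sum_eq_zero fun x _ => ?_
    rw [hfQ0 x, mul_zero]
  -- reduce the initial design to at most k+1 points
  obtain ⟨S₀, W₀, hS₀Icc, hW₀pos, hW₀0, hS₀card, hmom₀, hext₀⟩ :=
    CCU.reduce Ψ hk hCheb s.card s Wξ le_rfl hsIcc hWξpos hWξ0
  -- the compact tuple space
  set val : (ℝ → ℝ) → ((Fin (k+1) → ℝ) × (Fin (k+1) → ℝ)) → ℝ :=
    fun g p => ∑ l : Fin (k+1), p.1 l * g (p.2 l) with hval
  set C₁ : Set ((Fin (k+1) → ℝ) × (Fin (k+1) → ℝ)) :=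
    {p | (∀ l, 0 ≤ p.1 l) ∧ (∀ l, p.2 l ∈ Set.Icc A B)} with hC₁
  set X : Set ((Fin (k+1) → ℝ) × (Fin (k+1) → ℝ)) :=
    {p | ((∀ l, 0 ≤ p.1 l) ∧ (∀ l, p.2 l ∈ Set.Icc A B)) ∧
      (∀ i, val (Ψ i) p = cmom i) ∧ (∀ Q : Fin p₁ → ℝ, γ Q ≤ val (fQ Q) p)} with hX
  have hXC₁ : X ⊆ C₁ := fun p hp => hp.1
  have hXne : X.Nonempty := by
    obtain ⟨p₀, hp₀w, hp₀Icc, hp₀val⟩ :=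
      CCU.encode hAB.le S₀ W₀ hS₀Icc hS₀card (fun x hx => (hW₀pos x hx).le)
    refine ⟨p₀, ⟨⟨hp₀w, hp₀Icc⟩, ?_, ?_⟩⟩
    · intro i
      simp only [hval]
      rw [hp₀val (Ψ i), hmom₀ i]
    · intro Q
      simp only [hval]
      rw [hp₀val (fQ Q)]
      by_cases hQ : Q = 0
      · rw [hQ]
        rw [hwsumfQ0 S₀ W₀]
        simp only [hγ]
        rw [hwsumfQ0 s Wξ]
      · simp only [hγ]
        exact hext₀ (fQ Q) (hChebQ Q hQ)
  have hC₁closed : IsClosed C₁ := by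
    have : C₁ = (Prod.fst ⁻¹' (Set.univ.pi fun _ : Fin (k+1) => Set.Ici (0:ℝ))) ∩
        (Prod.snd ⁻¹' (Set.univ.pi fun _ : Fin (k+1) => Set.Icc A B)) := by
      ext p
      constructor
      · rintro ⟨h1, h2⟩
        exact ⟨fun l _ => h1 l, fun l _ => h2 l⟩
      · rintro ⟨h1, h2⟩
        exact ⟨fun l => h1 l (Set.mem_univ l), fun l => h2 l (Set.mem_univ l)⟩
    rw [this]
    exact ((isClosed_set_pi fun i _ => isClosed_Ici).preimage continuous_fst).inter
      ((isClosed_set_pi fun i _ => isClosed_Icc).preimage continuous_snd)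
  have hvalcont : ∀ g : ℝ → ℝ, ContinuousOn g (Set.Icc A B) → ContinuousOn (val g) C₁ := by
    intro g hg
    simp only [hval]
    refine continuousOn_finset_sum _ fun l _ => ?_
    refine ContinuousOn.mul ?_ ?_
    · exact ((continuous_apply l).comp continuous_fst).continuousOn
    · refine hg.comp ((continuous_apply l).comp continuous_snd).continuousOn ?_
      intro p hp
      exact hp.2 l
  have hcontfQ : ∀ Q : Fin p₁ → ℝ, ContinuousOn (fQ Q) (Set.Icc A B) := by
    intro Q
    have : fQ Q = fun x => ∑ a, Q a * (∑ b, C x a b * Q b) := by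
      funext x
      simp only [hfQ]
      simp [dotProduct, Matrix.mulVec]
    rw [this]
    refine continuousOn_finset_sum _ fun a _ => ?_
    refine ContinuousOn.mul continuousOn_const ?_
    refine continuousOn_finset_sum _ fun b _ => ?_
    exact (hcontC a b).mul continuousOn_const
  have hcontf₀ : ContinuousOn f₀ (Set.Icc A B) := by
    simp only [hf₀]
    exact continuousOn_finset_sum _ fun a _ => hcontC a a
  have hXclosed : IsClosed X := by
    have hXeq : X = (⋂ i : Fin k, C₁ ∩ (val (Ψ i)) ⁻¹' {cmom i}) ∩
        (⋂ Q : Fin p₁ → ℝ, C₁ ∩ (val (fQ Q)) ⁻¹' (Set.Ici (γ Q))) := by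
      ext p
      constructor
      · rintro ⟨h1, h2, h3⟩
        exact ⟨Set.mem_iInter.2 fun i => ⟨h1, h2 i⟩,
          Set.mem_iInter.2 fun Q => ⟨h1, h3 Q⟩⟩
      · rintro ⟨h1, h2⟩
        have h1' := Set.mem_iInter.1 h1 ⟨0, hk⟩
        exact ⟨h1'.1, fun i => (Set.mem_iInter.1 h1 i).2,
          fun Q => (Set.mem_iInter.1 h2 Q).2⟩
    rw [hXeq]
    refine IsClosed.inter (isClosed_iInter fun i => ?_) (isClosed_iInter fun Q => ?_)
    · exact (hvalcont _ (hcontΨ i)).preimage_isClosed_of_isClosed hC₁closed isClosed_singleton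
    · exact (hvalcont _ (hcontfQ Q)).preimage_isClosed_of_isClosed hC₁closed isClosed_Ici
  have hXsub : X ⊆ (Set.univ.pi fun _ : Fin (k+1) => Set.Icc (0:ℝ) 1) ×ˢ
      (Set.univ.pi fun _ : Fin (k+1) => Set.Icc A B) := by
    rintro p ⟨⟨h1, h2⟩, h3, _⟩
    have hsum : ∑ l : Fin (k+1), p.1 l = 1 := by
      have := h3 ⟨0, hk⟩
      simp only [hval] at this
      rw [hmass1] at this
      rw [← this]
      refine Finset.sum_congr rfl fun l _ => ?_
      rw [hΨ0, mul_one]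
    constructor
    · intro l _
      refine ⟨h1 l, ?_⟩
      rw [← hsum]
      exact Finset.single_le_sum (fun i _ => h1 i) (Finset.mem_univ l)
    · intro l _
      exact h2 l
  have hXcomp : IsCompact X :=
    (IsCompact.prod (isCompact_univ_pi fun _ => isCompact_Icc)
      (isCompact_univ_pi fun _ => isCompact_Icc)).of_isClosed_subset hXclosed hXsub
  obtain ⟨pm, hpmX, hpmmax⟩ := hXcomp.exists_isMaxOn hXne ((hvalcont f₀ hcontf₀).mono hXC₁)
  obtain ⟨⟨hw, hIcc⟩, hpmom, hpQ⟩ := hpmX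
  obtain ⟨Sf, Wf, hWfpos, hWf0, hSfcard, hSfcov, hWfval⟩ := CCU.decode pm hw
  have hSfIcc : ↑Sf ⊆ Set.Icc A B := by
    intro x hx
    obtain ⟨l, rfl⟩ := hSfcov x hx
    exact hIcc l
  -- the support of the maximizer is small
  have hcard : Sf.card ≤ (k+2)/2 := by
    by_contra hbig
    push_neg at hbig
    have himp : ∃ (S' : Finset ℝ) (W' : ℝ → ℝ) (t : ℝ) (y : Fin (k+1) → ℝ), 0 < t ∧
        StrictMono y ∧ (∀ l, y l ∈ Set.Icc A B) ∧
        ↑S' ⊆ Set.Icc A B ∧ (∀ x ∈ S', 0 < W' x) ∧ (∀ x ∉ S', W' x = 0) ∧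
        S'.card ≤ k + 1 ∧
        (∀ g : ℝ → ℝ, CCU.wsum S' W' g
          = CCU.wsum Sf Wf g + t * ∑ l : Fin (k+1), CCU.chebD Ψ y l * g (y l)) := by
      rcases le_or_gt (k+1) Sf.card with hc | hc
      · obtain ⟨S', W', t, y, ht, hym, hyI, h1, h2, h3, h4, h5⟩ :=
          CCU.improve_big Ψ hk hCheb Sf Wf hSfIcc hWfpos hWf0 hc
        exact ⟨S', W', t, y, ht, hym, hyI, h1, h2, h3, by omega, h5⟩
      · obtain ⟨S', W', t, y, ht, hym, hyI, h1, h2, h3, h4, h5⟩ :=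
          CCU.improve_small Ψ hk hCheb Sf Wf hSfIcc hWfpos hWf0 (by omega) (by omega)
        exact ⟨S', W', t, y, ht, hym, hyI, h1, h2, h3, by omega, h5⟩
    obtain ⟨S', W', t, y, ht, hymono, hyIcc, hIcc', hpos', hzero', hcard', hiden⟩ := himp
    obtain ⟨p', hp'w, hp'Icc, hp'val⟩ :=
      CCU.encode hAB.le S' W' hIcc' hcard' (fun x hx => (hpos' x hx).le)
    have hp'X : p' ∈ X := by
      refine ⟨⟨hp'w, hp'Icc⟩, ?_, ?_⟩
      · intro i
        simp only [hval]
        rw [hp'val (Ψ i), hiden (Ψ i), CCU.sum_chebD_psi, mul_zero, add_zero,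
          hWfval (Ψ i)]
        exact hpmom i
      · intro Q
        simp only [hval]
        rw [hp'val (fQ Q), hiden (fQ Q)]
        have h1 : γ Q ≤ CCU.wsum Sf Wf (fQ Q) := by
          rw [hWfval (fQ Q)]
          exact hpQ Q
        have h2 : 0 ≤ t * ∑ l : Fin (k+1), CCU.chebD Ψ y l * fQ Q (y l) := by
          by_cases hQ : Q = 0
          · subst hQ
            have : ∀ l : Fin (k+1), CCU.chebD Ψ y l * fQ 0 (y l) = 0 := by
              intro l; rw [hfQ0, mul_zero]
            rw [Finset.sum_congr rfl fun l _ => this l]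
            simp
          · have := CCU.sum_chebD_ext (hChebQ Q hQ) hymono hyIcc
            positivity
        linarith
    have hstrict : val f₀ pm < val f₀ p' := by
      simp only [hval]
      rw [hp'val f₀, hiden f₀, ← hWfval f₀]
      have hpos0 : 0 < ∑ l : Fin (k+1), CCU.chebD Ψ y l * f₀ (y l) := by
        have hsplit : ∑ l : Fin (k+1), CCU.chebD Ψ y l * f₀ (y l)
            = ∑ a : Fin p₁, ∑ l : Fin (k+1), CCU.chebD Ψ y l * C (y l) a a := by
          rw [Finset.sum_comm]
          refine Finset.sum_congr rfl fun l _ => ?_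
          simp only [hf₀]; rw [ Finset.mul_sum]
        rw [hsplit]
        have hne : Nonempty (Fin p₁) := ⟨⟨0, hp⟩⟩
        refine Finset.sum_pos (fun a _ => ?_) Finset.univ_nonempty
        have hsingle : (Pi.single a 1 : Fin p₁ → ℝ) ≠ 0 := by
          intro h
          have := congrFun h a
          rw [Pi.single_eq_same] at this
          exact one_ne_zero this
        have heq : ∀ l : Fin (k+1), C (y l) a a
            = (Pi.single a 1 : Fin p₁ → ℝ) ⬝ᵥ (C (y l) *ᵥ (Pi.single a 1 : Fin p₁ → ℝ)) := by
          intro l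
          simp [Matrix.mulVec_single, single_dotProduct]
        rw [Finset.sum_congr rfl fun l _ => by rw [heq l]]
        exact CCU.sum_chebD_ext (hChebQ _ hsingle) hymono hyIcc
      nlinarith
    have := hpmmax hp'X
    simp only [hval] at this hstrict
    exact absurd this (not_le.2 hstrict)
  -- construct the dominating design measure
  set ξp : Measure ℝ := ∑ x ∈ Sf, (ENNReal.ofReal (Wf x)) • Measure.dirac x with hξp
  have happly : ∀ x ∈ Sf, ξp {x} = ENNReal.ofReal (Wf x) := by
    intro x hx
    rw [hξp]
    exact CCU.sum_dirac_apply Sf _ hx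
  have hmassSf : ∑ x ∈ Sf, Wf x = 1 := by
    have h1 := hpmom ⟨0, hk⟩
    simp only [hval] at h1
    rw [← hWfval (Ψ ⟨0, hk⟩), hmass1] at h1
    rw [← h1]
    unfold CCU.wsum
    refine Finset.sum_congr rfl fun x _ => ?_
    rw [hΨ0, mul_one]
  have hprobp : IsProbabilityMeasure ξp := by
    constructor
    rw [hξp, CCU.sum_dirac_univ]
    rw [← ENNReal.ofReal_sum_of_nonneg (fun x hx => (hWfpos x hx).le), hmassSf]
    simp
  have hintp : ∀ g : ℝ → ℝ, ∫ x, g x ∂ξp = CCU.wsum Sf Wf g := by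
    intro g
    rw [hξp, CCU.integral_sum_dirac Sf _ (fun x _ => ENNReal.ofReal_ne_top) g]
    unfold CCU.wsum
    refine Finset.sum_congr rfl fun x hx => ?_
    rw [ENNReal.toReal_ofReal (hWfpos x hx).le]
  refine ⟨ξp, Sf, ⟨hprobp, hSfIcc, ?_, ?_⟩, hcard, ?_, ?_⟩
  · intro x hx
    rw [happly x hx]
    exact ENNReal.ofReal_pos.2 (hWfpos x hx)
  · rw [hξp]
    refine Finset.sum_congr rfl fun x hx => ?_
    rw [happly x hx]
  · intro i
    rw [hintp (Ψ i), hint (Ψ i), hWfval (Ψ i)]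
    exact hpmom i
  · have hmx : ∀ a b, (matrixIntegral C ξp - matrixIntegral C ξ) a b
        = CCU.wsum Sf Wf (fun x => C x a b) - CCU.wsum s Wξ (fun x => C x a b) := by
      intro a b
      simp only [Matrix.sub_apply, matrixIntegral, Matrix.of_apply]
      rw [hintp, hint]
    rw [Matrix.posSemidef_iff_dotProduct_mulVec]
    constructor
    · -- Hermitian
      refine Matrix.ext fun a b => ?_
      rw [Matrix.conjTranspose_apply, star_trivial, hmx b a, hmx a b]
      have hsym : ∀ (S : Finset ℝ) (W : ℝ → ℝ), ↑S ⊆ Set.Icc A B →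
          CCU.wsum S W (fun x => C x b a) = CCU.wsum S W (fun x => C x a b) := by
        intro S W hSi
        unfold CCU.wsum
        refine Finset.sum_congr rfl fun x hx => ?_
        have h3 : (C x)ᵀ = C x := hsymm x (hSi hx)
        have h2 : C x b a = C x a b := by
          calc C x b a = (C x)ᵀ a b := (Matrix.transpose_apply _ _ _).symm
          _ = C x a b := by rw [h3]
        show W x * C x b a = W x * C x a b
        rw [h2]
      rw [hsym Sf Wf hSfIcc, hsym s Wξ hsIcc]
    · -- positive semidefiniteness
      intro Qv
      have hmeq : (matrixIntegral C ξp - matrixIntegral C ξ)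
          = (Matrix.of fun a b => CCU.wsum Sf Wf (fun x => C x a b)) -
            (Matrix.of fun a b => CCU.wsum s Wξ (fun x => C x a b)) := by
        refine Matrix.ext fun a b => ?_
        rw [hmx a b]
        simp
      rw [hmeq, Matrix.sub_mulVec, star_trivial, dotProduct_sub,
        CCU.quad_wsum, CCU.quad_wsum]
      have h1 : γ Qv ≤ val (fQ Qv) pm := hpQ Qv
      simp only [hval] at h1; rw [← hWfval (fQ Qv)] at h1
      simp only [hγ] at h1
      have he1 : CCU.wsum Sf Wf (fun x => Qv ⬝ᵥ (C x *ᵥ Qv)) = CCU.wsum Sf Wf (fQ Qv) := rfl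
      have he2 : CCU.wsum s Wξ (fun x => Qv ⬝ᵥ (C x *ᵥ Qv)) = CCU.wsum s Wξ (fQ Qv) := rfl
      rw [he1, he2]
      linarith
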